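/- Let a, b, x ∈ H_n with x^{-1} a x = b and t_i(x) ≡ 0 (mod |t_i(a)|) for all i ∈ I(a) = {i : t_i(a) ≠ 0}. Let i_1,…,i_k be a set of representatives of the equivalence classes under ∼_a of the elements of I(a). Then there exists x' ∈ H_n such that x'^{-1} a x' = b, t_i(x') ≡ 0 (mod |t_i(a)|) for all i ∈ I(a), and t_{i_1}(x') = ⋯ = t_{i_k}(x') = 0. -/

import Mathlib

namespace HoughtonPaper

/-- The set `X_n = {1,…,n} × ℕ` (rays indexed by `Fin n`). -/
abbrev X (n : ℕ) := Fin n × ℕ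

/-- `g` acts as the translation by `t i` on the ray `i` from the point `z` on. -/
def EvTransFrom {n : ℕ} (g : Equiv.Perm (X n)) (t : Fin n → ℤ) (z : ℕ) : Prop :=
  ∀ (i : Fin n) (m : ℕ), z ≤ m →
    (g (i, m)).1 = i ∧ ((g (i, m)).2 : ℤ) = (m : ℤ) + t i

/-- `g` is eventually a translation with translation vector `t`. -/
def EvTrans {n : ℕ} (g : Equiv.Perm (X n)) (t : Fin n → ℤ) : Prop :=
  ∃ z : ℕ, EvTransFrom g t z

/-- Membership in Houghton's group `H_n`. -/
def InH {n : ℕ} (g : Equiv.Perm (X n)) : Prop :=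
  ∃ t : Fin n → ℤ, EvTrans g t

/-- Support of a permutation. -/
def supp {α : Type*} (g : Equiv.Perm α) : Set α := {x | g x ≠ x}

/-- Membership in `FSym(X_n)`, the finitely supported permutations. -/
def InFSym {n : ℕ} (g : Equiv.Perm (X n)) : Prop := (supp g).Finite

/-- Two sets are almost equal if their symmetric difference is finite. -/
def AlmostEq {α : Type*} (A B : Set α) : Prop := (symmDiff A B).Finite

/-- The set `X_{i,r}(g) = {(i,m) : m ≡ r mod |t_i(g)|}`, for `t` the translation vector. -/
def Xir {n : ℕ} (i : Fin n) (t : Fin n → ℤ) (r : ℕ) : Set (X n) :=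
  {p : X n | p.1 = i ∧ p.2 % (t i).natAbs = r}

/-- Forward orbit `{(i,m)g^k : k ≥ 0}`. -/
def fwdOrbit {n : ℕ} (g : Equiv.Perm (X n)) (p : X n) : Set (X n) :=
  Set.range fun k : ℕ => (g ^ k) p

/-- The orbit `{x g^k : k ∈ ℤ}`. -/
def orbit {n : ℕ} (g : Equiv.Perm (X n)) (p : X n) : Set (X n) :=
  Set.range fun k : ℤ => (g ^ k) p

/-- `A` is an infinite orbit of `g`. -/
def IsInfOrbit {n : ℕ} (g : Equiv.Perm (X n)) (A : Set (X n)) : Prop :=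
  (∃ p : X n, A = orbit g p) ∧ A.Infinite

/-- The generating relation of `∼_g`: some infinite orbit of `g` is almost equal
to `X_{i,r}(g) ∪ X_{j,s}(g)`. -/
def BaseRel {n : ℕ} (g : Equiv.Perm (X n)) (t : Fin n → ℤ) (i j : Fin n) : Prop :=
  ∃ r s : ℕ, r < (t i).natAbs ∧ s < (t j).natAbs ∧
    ∃ A : Set (X n), IsInfOrbit g A ∧ AlmostEq A (Xir i t r ∪ Xir j t s)

/-- The equivalence relation `∼_g` on the rays, generated by `BaseRel`. -/
def SimRel {n : ℕ} (g : Equiv.Perm (X n)) (t : Fin n → ℤ) : Fin n → Fin n → Prop :=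
  Relation.EqvGen (BaseRel g t)

def genFun {n : ℕ} [NeZero n] (i : Fin n) : X n → X n :=
  fun p =>
    if p.1 = 0 then ((0 : Fin n), p.2 + 1)
    else if p.1 = i then (if p.2 = 0 then ((0 : Fin n), 0) else (i, p.2 - 1))
    else p

def genInvFun {n : ℕ} [NeZero n] (i : Fin n) : X n → X n :=
  fun p =>
    if p.1 = 0 then (if p.2 = 0 then (i, 0) else ((0 : Fin n), p.2 - 1))
    else if p.1 = i then (i, p.2 + 1)
    else p

/-- The generator `g_i` of Houghton's group (ray `1` of the paper is ray `0` here). -/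
def gen {n : ℕ} [NeZero n] (i : Fin n) (hi : i ≠ 0) : Equiv.Perm (X n) where
  toFun := genFun i
  invFun := genInvFun i
  left_inv := by
    rintro ⟨j, m⟩
    by_cases hj : j = 0
    · subst hj
      simp [genFun, genInvFun]
    · by_cases hji : j = i
      · subst hji
        rcases Nat.eq_zero_or_pos m with hm | hm
        · subst hm; simp [genFun, genInvFun, hi]
        · simp [genFun, genInvFun, hi, hm.ne', Nat.sub_add_cancel hm]
      · simp [genFun, genInvFun, hj, hji]
  right_inv := by
    rintro ⟨j, m⟩
    by_cases hj : j = 0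
    · subst hj
      rcases Nat.eq_zero_or_pos m with hm | hm
      · subst hm; simp [genFun, genInvFun, hi]
      · simp [genFun, genInvFun, hm.ne', hi.symm, Nat.sub_add_cancel hm]
    · by_cases hji : j = i
      · subst hji
        simp [genFun, genInvFun, hj]
      · simp [genFun, genInvFun, hj, hji]

/-- The transposition `τ` exchanging `(1,0)` and `(2,0)` (here `(0,0)` and `(1,0)`). -/
def tau (n : ℕ) [NeZero n] : Equiv.Perm (X n) :=
  Equiv.swap ((0 : Fin n), 0) ((1 : Fin n), 0)

/-- Letters of the alphabet `{g_2,…,g_n}^{±1}`. -/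
abbrev Letter (n : ℕ) [NeZero n] := {i : Fin n // i ≠ 0} × Bool

/-- Words over `{g_2,…,g_n}^{±1}`. -/
abbrev Word (n : ℕ) [NeZero n] := List (Letter n)

def evalLetter {n : ℕ} [NeZero n] (l : Letter n) : Equiv.Perm (X n) :=
  if l.2 then gen l.1.1 l.1.2 else (gen l.1.1 l.1.2)⁻¹

/-- The element of `Sym(X_n)` represented by a word. -/
def wordProd {n : ℕ} [NeZero n] (w : Word n) : Equiv.Perm (X n) :=
  (w.map evalLetter).prod

end HoughtonPaper

open HoughtonPaper
section Aux
open HoughtonPaper Equiv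

variable {n : ℕ}

lemma orbit_mem (g : Equiv.Perm (X n)) (p : X n) (k : ℤ) : (g ^ k) p ∈ orbit g p := ⟨k, rfl⟩

lemma orbit_apply (g : Equiv.Perm (X n)) (p : X n) : orbit g (g p) = orbit g p := by
  ext q
  constructor
  · rintro ⟨k, rfl⟩
    refine ⟨k + 1, ?_⟩
    show (g ^ (k + 1)) p = (g ^ k) (g p)
    rw [zpow_add_one]; rfl
  · rintro ⟨k, rfl⟩
    refine ⟨k - 1, ?_⟩
    show (g ^ (k - 1)) (g p) = (g ^ k) p
    have : (g ^ (k - 1) * g) p = (g ^ k) p := by rw [← zpow_add_one, sub_add_cancel]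
    simpa [Equiv.Perm.mul_apply] using this

lemma orbit_pow_apply (g : Equiv.Perm (X n)) (p : X n) (d : ℕ) :
    orbit g ((g ^ d) p) = orbit g p := by
  induction d with
  | zero => simp
  | succ d ih =>
    rw [pow_succ', Equiv.Perm.mul_apply, orbit_apply, ih]

lemma orbit_inv (g : Equiv.Perm (X n)) (p : X n) : orbit g⁻¹ p = orbit g p := by
  ext q
  constructor
  · rintro ⟨k, rfl⟩
    refine ⟨-k, ?_⟩
    show (g ^ (-k)) p = (g⁻¹ ^ k) p
    rw [zpow_neg, ← inv_zpow]
  · rintro ⟨k, rfl⟩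
    refine ⟨-k, ?_⟩
    show (g⁻¹ ^ (-k)) p = (g ^ k) p
    rw [inv_zpow, ← zpow_neg, neg_neg]

lemma orbit_finite_of_period {g : Equiv.Perm (X n)} {p : X n} {d : ℕ} (hd : 0 < d)
    (h : (g ^ d) p = p) : (orbit g p).Finite := by
  apply Set.Finite.subset (((Set.finite_Icc (0 : ℤ) d)).image (fun r => (g ^ r) p))
  rintro q ⟨k, rfl⟩
  have hd' : (d : ℤ) ≠ 0 := by exact_mod_cast hd.ne'
  have hfix : ∀ m : ℤ, ((g ^ (d : ℤ)) ^ m) p = p := by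
    intro m
    have h' : (g ^ (d : ℤ)) p = p := by rw [zpow_natCast]; exact h
    exact Equiv.Perm.zpow_apply_eq_self_of_apply_eq_self h' m
  refine ⟨k % d, ⟨Int.emod_nonneg k hd', (Int.emod_lt_of_pos k (by exact_mod_cast hd)).le⟩, ?_⟩
  have hk : k = (d : ℤ) * (k / d) + k % d := (Int.mul_ediv_add_emod k d).symm
  calc (g ^ (k % d)) p = (g ^ (k % d)) (((g ^ (d:ℤ)) ^ (k / d)) p) := by rw [hfix]
    _ = (g ^ (k % d) * (g ^ (d:ℤ)) ^ (k / d)) p := rfl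
    _ = (g ^ k) p := by rw [← zpow_mul, ← zpow_add]; rw [Int.emod_add_mul_ediv k d]

lemma iter_injective {g : Equiv.Perm (X n)} {p : X n} (hinf : (orbit g p).Infinite) :
    Function.Injective (fun k : ℕ => (g ^ k) p) := by
  have key : ∀ k1 k2 : ℕ, k1 < k2 → (g ^ k1) p = (g ^ k2) p → False := by
    intro k1 k2 hlt he
    have h1 : (g ^ (k2 - k1)) ((g ^ k1) p) = (g ^ k1) p := by
      rw [← Equiv.Perm.mul_apply, ← pow_add]
      rw [Nat.sub_add_cancel hlt.le, ← he]
    have := orbit_finite_of_period (Nat.sub_pos_of_lt hlt) h1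
    rw [orbit_pow_apply] at this
    exact hinf this
  intro k1 k2 he
  rcases lt_trichotomy k1 k2 with h | h | h
  · exact absurd (key k1 k2 h he) (by simp)
  · exact h
  · exact absurd (key k2 k1 h he.symm) (by simp)

lemma fwd_escape {g : Equiv.Perm (X n)} {t : Fin n → ℤ} {z : ℕ} (hg : EvTransFrom g t z)
    (p : X n) (hinf : (orbit g p).Infinite) :
    ∃ (K : ℕ) (i : Fin n) (m0 : ℕ), 0 < t i ∧ z ≤ m0 ∧
      ∀ k : ℕ, (g ^ (K + k)) p = (i, m0 + k * (t i).natAbs) := by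
  have hinj := iter_injective hinf
  -- the trajectory is eventually above z
  have hVfin : ({q : X n | q.2 < z}).Finite := by
    have : ({q : X n | q.2 < z}) = (Set.univ : Set (Fin n)) ×ˢ Set.Iio z := by
      ext q; simp [Set.mem_prod]
    rw [this]
    exact Set.Finite.prod Set.finite_univ (Set.finite_Iio z)
  have hKfin : {k : ℕ | ((g ^ k) p).2 < z}.Finite := by
    have : {k : ℕ | ((g ^ k) p).2 < z} = (fun k : ℕ => (g ^ k) p) ⁻¹' {q : X n | q.2 < z} := rfl
    rw [this]
    exact Set.Finite.preimage hinj.injOn hVfin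
  obtain ⟨M, hM⟩ := hKfin.bddAbove
  have hK0 : ∀ k, M + 1 ≤ k → z ≤ ((g ^ k) p).2 := by
    intro k hk
    by_contra hlt
    have := hM (Set.mem_setOf_eq ▸ (not_le.mp hlt) : k ∈ {k : ℕ | ((g ^ k) p).2 < z})
    omega
  set K0 := M + 1 with hK0def
  set i := ((g ^ K0) p).1 with hi
  set m0 := ((g ^ K0) p).2 with hm0
  have key : ∀ k : ℕ, ((g ^ (K0 + k)) p).1 = i ∧ (((g ^ (K0 + k)) p).2 : ℤ) = (m0 : ℤ) + k * t i := by
    intro k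
    induction k with
    | zero => simp; exact ⟨rfl, rfl⟩
    | succ k ih =>
      have hz : z ≤ ((g ^ (K0 + k)) p).2 := hK0 _ (by omega)
      set q := (g ^ (K0 + k)) p with hq
      have hstep : (g ^ (K0 + (k + 1))) p = g q := by
        rw [hq, ← Equiv.Perm.mul_apply, ← pow_succ', Nat.add_succ]
      have hgq := hg q.1 q.2 hz
      rw [ih.1] at hgq
      constructor
      · rw [hstep]; rw [show q = (q.1, q.2) from rfl, ih.1] at hgq ⊢; exact hgq.1
      · rw [hstep]
        rw [show q = (q.1, q.2) from rfl, ih.1] at hgq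
        rw [show g q = g (i, q.2) from by rw [show q = (q.1, q.2) from rfl, ih.1]]
        rw [hgq.2]
        push_cast
        rw [ih.2]
        ring
  have hzm0 : z ≤ m0 := hK0 K0 le_rfl
  -- t i cannot be 0
  have hne : t i ≠ 0 := by
    intro h0
    have h1 := key 1
    have h0' : (g ^ (K0 + 1)) p = (g ^ (K0 + 0)) p := by
      have h2 := key 0
      apply Prod.ext
      · rw [h1.1, h2.1]
      · have : (((g ^ (K0 + 1)) p).2 : ℤ) = (((g ^ (K0 + 0)) p).2 : ℤ) := by
          rw [h1.2, h2.2, h0]; ring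
        exact_mod_cast this
    have := hinj h0'
    omega
  -- t i cannot be negative
  have hpos : 0 < t i := by
    rcases hne.lt_or_gt with hlt | hgt
    · exfalso
      have h1 := (key (m0 + 1)).2
      have h2 : (0 : ℤ) ≤ (((g ^ (K0 + (m0 + 1))) p).2 : ℤ) := by positivity
      have h3 : t i ≤ -1 := by omega
      have h4 : ((m0 : ℤ) + 1) * t i ≤ ((m0 : ℤ) + 1) * (-1) :=
        mul_le_mul_of_nonneg_left h3 (by positivity)
      push_cast at h1
      linarith
    · exact hgt
  refine ⟨K0, i, m0, hpos, hzm0, fun k => ?_⟩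
  have hk := key k
  apply Prod.ext
  · exact hk.1
  · have : (((g ^ (K0 + k)) p).2 : ℤ) = ((m0 + k * (t i).natAbs : ℕ) : ℤ) := by
      rw [hk.2]
      push_cast
      rw [abs_of_pos hpos]
    exact_mod_cast this

end Aux
section Aux2
open HoughtonPaper Equiv

variable {n : ℕ}

/-- A bound on all |t i|. -/
def bnd {n : ℕ} (t : Fin n → ℤ) : ℕ := ∑ i : Fin n, (t i).natAbs

lemma natAbs_le_bnd (t : Fin n → ℤ) (i : Fin n) : (t i).natAbs ≤ bnd t := by
  unfold bnd
  exact Finset.single_le_sum (f := fun j => (t j).natAbs) (fun j _ => Nat.zero_le _)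
    (Finset.mem_univ i)

lemma abs_le_bnd (t : Fin n → ℤ) (i : Fin n) : -(bnd t : ℤ) ≤ t i ∧ t i ≤ (bnd t : ℤ) := by
  have h := natAbs_le_bnd t i
  constructor <;> omega

lemma inv_evtrans {g : Equiv.Perm (X n)} {t : Fin n → ℤ} {z : ℕ} (hg : EvTransFrom g t z) :
    EvTransFrom g⁻¹ (fun i => -t i) (z + bnd t) := by
  intro i m hm
  have habs := abs_le_bnd t i
  set m' : ℕ := ((m : ℤ) - t i).toNat with hm'def
  have h1 : (m' : ℤ) = (m : ℤ) - t i := Int.toNat_of_nonneg (by omega)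
  have hz' : z ≤ m' := by omega
  have h2 := hg i m' hz'
  have hgm : g (i, m') = (i, m) := by
    apply Prod.ext
    · exact h2.1
    · have : ((g (i, m')).2 : ℤ) = (m : ℤ) := by rw [h2.2, h1]; ring
      exact_mod_cast this
  have h3 : g⁻¹ (i, m) = (i, m') := by rw [← hgm]; simp
  rw [h3]
  exact ⟨rfl, by rw [h1]; ring⟩

lemma pos_ray {g : Equiv.Perm (X n)} {t : Fin n → ℤ} {z : ℕ} (hg : EvTransFrom g t z)
    {i : Fin n} (hpos : 0 < t i) {m : ℕ} (hm : z ≤ m) (d : ℕ) :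
    (g ^ d) (i, m) = (i, m + d * (t i).natAbs) := by
  induction d with
  | zero => simp
  | succ d ih =>
    have hstep : (g ^ (d + 1)) (i, m) = g ((g ^ d) (i, m)) := by
      rw [← Equiv.Perm.mul_apply, ← pow_succ']
    rw [hstep, ih]
    have h2 := hg i (m + d * (t i).natAbs) (by omega)
    apply Prod.ext
    · exact h2.1
    · have : ((g (i, m + d * (t i).natAbs)).2 : ℤ) = ((m + (d + 1) * (t i).natAbs : ℕ) : ℤ) := by
        rw [h2.2]
        push_cast
        rw [abs_of_pos hpos]
        ring
      exact_mod_cast this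

lemma uptail {g : Equiv.Perm (X n)} {t : Fin n → ℤ} {z : ℕ} (hg : EvTransFrom g t z)
    {i : Fin n} (hne : t i ≠ 0) {m : ℕ} (hm : z + bnd t ≤ m) (d : ℕ) :
    ((i, m + d * (t i).natAbs) : X n) ∈ orbit g (i, m) := by
  rcases hne.lt_or_gt with hlt | hgt
  · have hginv := inv_evtrans hg
    have hpos : 0 < (fun j => -t j) i := by simpa using hlt
    have h := pos_ray hginv hpos (le_refl (z + bnd t) |>.trans hm) d
    refine ⟨-(d : ℤ), ?_⟩
    show (g ^ (-(d : ℤ))) (i, m) = _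
    rw [zpow_neg, zpow_natCast, ← inv_pow, h]
    congr 1
    simp [Int.natAbs_neg]
  · refine ⟨(d : ℤ), ?_⟩
    show (g ^ ((d : ℤ))) (i, m) = _
    rw [zpow_natCast, pos_ray hg hgt (by omega) d]

lemma ray_inf {g : Equiv.Perm (X n)} {t : Fin n → ℤ} {z : ℕ} (hg : EvTransFrom g t z)
    {i : Fin n} (hne : t i ≠ 0) {m : ℕ} (hm : z + bnd t ≤ m) :
    {m' : ℕ | ((i, m') : X n) ∈ orbit g (i, m)}.Infinite := by
  have hc : 0 < (t i).natAbs := Int.natAbs_pos.2 hne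
  refine Set.infinite_of_injective_forall_mem (f := fun d : ℕ => m + d * (t i).natAbs) ?_ ?_
  · intro d1 d2 h
    simp only [add_right_inj] at h
    exact Nat.eq_of_mul_eq_mul_right hc h
  · intro d
    exact uptail hg hne hm d

lemma orbit_inf {g : Equiv.Perm (X n)} {t : Fin n → ℤ} {z : ℕ} (hg : EvTransFrom g t z)
    {i : Fin n} (hne : t i ≠ 0) {m : ℕ} (hm : z + bnd t ≤ m) :
    (orbit g ((i, m) : X n)).Infinite := by
  have hc : 0 < (t i).natAbs := Int.natAbs_pos.2 hne
  refine Set.infinite_of_injective_forall_mem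
    (f := fun d : ℕ => ((i, m + d * (t i).natAbs) : X n)) ?_ ?_
  · intro d1 d2 h
    simp only [Prod.mk.injEq, add_right_inj, true_and] at h
    exact Nat.eq_of_mul_eq_mul_right hc h
  · intro d
    exact uptail hg hne hm d

end Aux2
section Aux3
open HoughtonPaper Equiv

variable {n : ℕ}

lemma seg_fin (i : Fin n) (m0 : ℕ) : ({q : X n | q.1 = i ∧ q.2 < m0}).Finite := by
  apply Set.Finite.subset ((Set.finite_Iio m0).image (fun m => ((i, m) : X n)))
  rintro ⟨q1, q2⟩ ⟨h1, h2⟩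
  simp only at h1 h2
  subst h1
  exact ⟨q2, h2, rfl⟩

lemma struct {g : Equiv.Perm (X n)} {t : Fin n → ℤ} {z : ℕ} (hg : EvTransFrom g t z)
    (p : X n) (hinf : (orbit g p).Infinite) :
    ∃ i j : Fin n, BaseRel g t i j ∧
      ∀ i' : Fin n, {m : ℕ | ((i', m) : X n) ∈ orbit g p}.Infinite → i' = i ∨ i' = j := by
  obtain ⟨K, i, m0, hti, hm0, hfwd⟩ := fwd_escape hg p hinf
  have hginv := inv_evtrans hg
  have hinf' : (orbit g⁻¹ p).Infinite := by rwa [orbit_inv]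
  obtain ⟨K', j, m1, htj', hm1, hbwd0⟩ := fwd_escape hginv p hinf'
  have htj : t j < 0 := by simpa using htj'
  have hbwd : ∀ k : ℕ, (g⁻¹ ^ (K' + k)) p = (j, m1 + k * (t j).natAbs) := by
    intro k
    have := hbwd0 k
    simpa [Int.natAbs_neg] using this
  set ci := (t i).natAbs with hci
  set cj := (t j).natAbs with hcj
  have hcipos : 0 < ci := Int.natAbs_pos.2 hti.ne'
  have hcjpos : 0 < cj := Int.natAbs_pos.2 htj.ne
  set r := m0 % ci with hr
  set s := m1 % cj with hs
  set F : Set (X n) :=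
    ((fun k : ℤ => (g ^ k) p) '' Set.Icc (-(K' : ℤ)) (K : ℤ)) ∪
      {q : X n | q.1 = i ∧ q.2 < m0} ∪ {q : X n | q.1 = j ∧ q.2 < m1} with hF
  have hFfin : F.Finite := by
    refine (((Set.finite_Icc _ _).image _).union (seg_fin i m0)).union (seg_fin j m1)
  -- forward membership
  have hfwd_mem : ∀ k : ℤ, (K : ℤ) ≤ k → (g ^ k) p ∈ Xir i t r := by
    intro k hk
    set d := (k - K).toNat with hd
    have hkd : ((K + d : ℕ) : ℤ) = k := by push_cast; omega
    have : (g ^ k) p = (g ^ (K + d : ℕ)) p := by rw [← zpow_natCast, hkd]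
    rw [this, hfwd d]
    exact ⟨rfl, by simp [hr, ← hci, Nat.add_mul_mod_self_right]⟩
  have hbwd_mem : ∀ k : ℤ, k ≤ -(K' : ℤ) → (g ^ k) p ∈ Xir j t s := by
    intro k hk
    set d := (-k - K').toNat with hd
    have hkd : ((K' + d : ℕ) : ℤ) = -k := by push_cast; omega
    have : (g ^ k) p = (g⁻¹ ^ (K' + d : ℕ)) p := by
      rw [inv_pow, ← zpow_natCast, hkd, zpow_neg, inv_inv]
    rw [this, hbwd d]
    exact ⟨rfl, by simp [hs, ← hcj, Nat.add_mul_mod_self_right]⟩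
  have hcover : ∀ q ∈ orbit g p, q ∈ F ∪ (Xir i t r ∪ Xir j t s) := by
    rintro q ⟨k, rfl⟩
    rcases le_or_gt (K : ℤ) k with hk | hk
    · exact Or.inr (Or.inl (hfwd_mem k hk))
    · rcases le_or_gt k (-(K' : ℤ)) with hk' | hk'
      · exact Or.inr (Or.inr (hbwd_mem k hk'))
      · exact Or.inl (Or.inl (Or.inl ⟨k, ⟨hk'.le, hk.le⟩, rfl⟩))
  -- Xir tails are in the orbit
  have hXi_sub : ∀ q : X n, q ∈ Xir i t r → m0 ≤ q.2 → q ∈ orbit g p := by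
    rintro ⟨q1, q2⟩ ⟨hq1, hq2⟩ hmle
    simp only at hq1 hq2 hmle
    subst hq1
    have hmeq : m0 ≡ q2 [MOD ci] := by
      show m0 % ci = q2 % ci
      rw [hq2]
    obtain ⟨d, hd⟩ := (Nat.modEq_iff_dvd' hmle).mp hmeq
    refine ⟨((K + d : ℕ) : ℤ), ?_⟩
    show (g ^ ((K + d : ℕ) : ℤ)) p = (q1, q2)
    rw [zpow_natCast, hfwd d]
    have h5 : m0 + d * ci = q2 := by rw [mul_comm]; omega
    rw [h5]
  have hXj_sub : ∀ q : X n, q ∈ Xir j t s → m1 ≤ q.2 → q ∈ orbit g p := by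
    rintro ⟨q1, q2⟩ ⟨hq1, hq2⟩ hmle
    simp only at hq1 hq2 hmle
    subst hq1
    have hmeq : m1 ≡ q2 [MOD cj] := by
      show m1 % cj = q2 % cj
      rw [hq2]
    obtain ⟨d, hd⟩ := (Nat.modEq_iff_dvd' hmle).mp hmeq
    refine ⟨(-((K' + d : ℕ) : ℤ)), ?_⟩
    show (g ^ (-((K' + d : ℕ) : ℤ))) p = (q1, q2)
    rw [zpow_neg, zpow_natCast, ← inv_pow, hbwd d]
    have h5 : m1 + d * cj = q2 := by rw [mul_comm]; omega
    rw [h5]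
  have halmost : AlmostEq (orbit g p) (Xir i t r ∪ Xir j t s) := by
    apply Set.Finite.subset hFfin
    rintro q hq
    rw [Set.mem_symmDiff] at hq
    rcases hq with ⟨hqO, hqn⟩ | ⟨hqX, hqnO⟩
    · rcases hcover q hqO with hF' | hX'
      · exact hF'
      · exact absurd hX' hqn
    · rcases hqX with hqi | hqj
      · rcases le_or_gt m0 q.2 with hle | hlt
        · exact absurd (hXi_sub q hqi hle) hqnO
        · exact Or.inl (Or.inr ⟨hqi.1, hlt⟩)
      · rcases le_or_gt m1 q.2 with hle | hlt
        · exact absurd (hXj_sub q hqj hle) hqnO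
        · exact Or.inr ⟨hqj.1, hlt⟩
  refine ⟨i, j, ⟨r, s, Nat.mod_lt _ hcipos, Nat.mod_lt _ hcjpos,
    orbit g p, ⟨⟨p, rfl⟩, hinf⟩, halmost⟩, ?_⟩
  intro i' hi'
  by_contra hne
  push_neg at hne
  apply hi'
  have hsub : {m : ℕ | ((i', m) : X n) ∈ orbit g p} ⊆
      (fun m : ℕ => ((i', m) : X n)) ⁻¹' F := by
    intro m hm
    rcases hcover _ hm with hF' | hX'
    · exact hF'
    · exfalso
      rcases hX' with hXi' | hXj'
      · exact hne.1 hXi'.1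
      · exact hne.2 hXj'.1
  have hinjm : Function.Injective (fun m : ℕ => ((i', m) : X n)) := by
    intro m1 m2 h
    simpa using h
  exact Set.Finite.subset (Set.Finite.preimage hinjm.injOn hFfin) hsub

end Aux3
section Aux4
open HoughtonPaper Equiv

variable {n : ℕ}

lemma evtrans_one : EvTrans (1 : Equiv.Perm (X n)) 0 :=
  ⟨0, fun i m _ => ⟨rfl, by simp⟩⟩

lemma evtrans_mul {g h : Equiv.Perm (X n)} {tg th : Fin n → ℤ}
    (hg : EvTrans g tg) (hh : EvTrans h th) : EvTrans (g * h) (tg + th) := by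
  obtain ⟨zg, hg0⟩ := hg
  obtain ⟨zh, hh0⟩ := hh
  refine ⟨max zh (zg + bnd th), fun i m hm => ?_⟩
  have habs := abs_le_bnd th i
  have h1 := hh0 i m (le_trans (le_max_left _ _) hm)
  set m' := (h (i, m)).2 with hm'
  have hh1 : h (i, m) = (i, m') := Prod.ext h1.1 rfl
  have hm'z : zg ≤ m' := by
    have h2 := h1.2
    have h3 : (zg : ℤ) + bnd th ≤ (m : ℤ) := by exact_mod_cast le_trans (le_max_right _ _) hm
    omega
  have h2 := hg0 i m' hm'z
  have hmul : (g * h) (i, m) = g (i, m') := by rw [Equiv.Perm.mul_apply, hh1]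
  rw [hmul]
  refine ⟨h2.1, ?_⟩
  rw [h2.2]
  have := h1.2
  simp only [Pi.add_apply]
  omega

lemma evtrans_inv {g : Equiv.Perm (X n)} {t : Fin n → ℤ} (hg : EvTrans g t) :
    EvTrans g⁻¹ (-t) := by
  obtain ⟨z, hg0⟩ := hg
  exact ⟨z + bnd t, inv_evtrans hg0⟩

lemma evtrans_pow {g : Equiv.Perm (X n)} {t : Fin n → ℤ} (hg : EvTrans g t) (d : ℕ) :
    EvTrans (g ^ d) (d • t) := by
  induction d with
  | zero => rw [pow_zero, zero_smul]; exact evtrans_one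
  | succ d ih =>
    rw [pow_succ, succ_nsmul]
    exact evtrans_mul ih hg

lemma evtrans_zpow {g : Equiv.Perm (X n)} {t : Fin n → ℤ} (hg : EvTrans g t) (c : ℤ) :
    EvTrans (g ^ c) (c • t) := by
  rcases Int.eq_nat_or_neg c with ⟨d, rfl | rfl⟩
  · rw [zpow_natCast, natCast_zsmul]
    exact evtrans_pow hg d
  · rw [zpow_neg, zpow_natCast, neg_smul, natCast_zsmul]
    exact evtrans_inv (evtrans_pow hg d)

lemma evtrans_listProd : ∀ L : List (Equiv.Perm (X n) × (Fin n → ℤ)),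
    (∀ q ∈ L, EvTrans q.1 q.2) → EvTrans (L.map Prod.fst).prod (L.map Prod.snd).sum := by
  intro L
  induction L with
  | nil => intro _; simpa using evtrans_one
  | cons q L ih =>
    intro hmem
    simp only [List.map_cons, List.prod_cons, List.sum_cons]
    exact evtrans_mul (hmem q (List.mem_cons_self)) (ih fun q' hq' => hmem q' (List.mem_cons_of_mem q hq'))

lemma list_sum_apply (i : Fin n) : ∀ L : List (Fin n → ℤ), L.sum i = (L.map (fun f => f i)).sum := by
  intro L
  induction L with
  | nil => simp
  | cons f L ih => simp [ih]

end Aux4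
theorem statement13 (n : ℕ) (hn : 2 ≤ n) (a b x : Equiv.Perm (X n))
    (ta tb tx : Fin n → ℤ) (ha : EvTrans a ta) (hb : EvTrans b tb) (hx : EvTrans x tx)
    (hconj : x⁻¹ * a * x = b)
    (hmod : ∀ i : Fin n, ta i ≠ 0 → ta i ∣ tx i)
    (k : ℕ) (reps : Fin k → Fin n)
    (hrepsI : ∀ l : Fin k, ta (reps l) ≠ 0)
    (hcover : ∀ i : Fin n, ta i ≠ 0 → ∃ l : Fin k, SimRel a ta i (reps l))
    (hdistinct : ∀ l l' : Fin k, SimRel a ta (reps l) (reps l') → l = l') :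
    ∃ (x' : Equiv.Perm (X n)) (tx' : Fin n → ℤ), EvTrans x' tx' ∧
      x'⁻¹ * a * x' = b ∧
      (∀ i : Fin n, ta i ≠ 0 → ta i ∣ tx' i) ∧
      ∀ l : Fin k, tx' (reps l) = 0 := by
  classical
  obtain ⟨za, ha0⟩ := ha
  set Z := za + bnd ta with hZ
  -- the invariant sets: points whose orbit is infinite and meets a ray of class `reps l`
  set S : Fin k → Set (X n) := fun l =>
    {p | (orbit a p).Infinite ∧ ∃ i' : Fin n, SimRel a ta (reps l) i' ∧
      {m : ℕ | ((i', m) : X n) ∈ orbit a p}.Infinite} with hS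
  have hSinv : ∀ (l : Fin k) (q : X n), q ∈ S l ↔ a q ∈ S l := by
    intro l q
    simp only [hS, Set.mem_setOf_eq]
    rw [orbit_apply]
  set g' : Fin k → Equiv.Perm (X n) := fun l =>
    Equiv.Perm.ofSubtype (a.subtypePerm (fun q => (hSinv l q).symm)) with hg'
  have hg'mem : ∀ (l : Fin k) (q : X n), q ∈ S l → g' l q = a q := by
    intro l q hq
    simp only [hg']
    rw [Equiv.Perm.ofSubtype_apply_of_mem _ hq]
    rfl
  have hg'nmem : ∀ (l : Fin k) (q : X n), q ∉ S l → g' l q = q := by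
    intro l q hq
    simp only [hg']
    exact Equiv.Perm.ofSubtype_apply_of_not_mem _ hq
  have hcomm : ∀ l : Fin k, Commute a (g' l) := by
    intro l
    show a * g' l = g' l * a
    apply Equiv.ext
    intro q
    simp only [Equiv.Perm.mul_apply]
    by_cases hq : q ∈ S l
    · rw [hg'mem l q hq, hg'mem l (a q) ((hSinv l q).mp hq)]
    · rw [hg'nmem l q hq, hg'nmem l (a q) (fun h => hq ((hSinv l q).mpr h))]
  -- the translation vector of g' l
  set tl : Fin k → Fin n → ℤ := fun l i =>
    if ta i ≠ 0 ∧ SimRel a ta (reps l) i then ta i else 0 with htldef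
  have htl : ∀ l : Fin k, EvTransFrom (g' l) (tl l) Z := by
    intro l i m hm
    by_cases h0 : ta i = 0
    · have h1 := ha0 i m (by omega)
      have hfix : a (i, m) = (i, m) := by
        apply Prod.ext h1.1
        have : ((a (i, m)).2 : ℤ) = (m : ℤ) := by rw [h1.2, h0]; ring
        exact_mod_cast this
      have hfix' : g' l (i, m) = (i, m) := by
        by_cases hq : ((i, m) : X n) ∈ S l
        · rw [hg'mem l _ hq, hfix]
        · exact hg'nmem l _ hq
      rw [hfix']
      exact ⟨rfl, by simp [htldef, h0]⟩
    · by_cases hsim : SimRel a ta (reps l) i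
      · have hmem : ((i, m) : X n) ∈ S l :=
          ⟨orbit_inf ha0 h0 hm, i, hsim, ray_inf ha0 h0 hm⟩
        rw [hg'mem l _ hmem]
        have h1 := ha0 i m (by omega)
        refine ⟨h1.1, ?_⟩
        rw [h1.2]
        simp [htldef, h0, hsim]
      · have hnmem : ((i, m) : X n) ∉ S l := by
          rintro ⟨hoinf, i', hsim', hray'⟩
          obtain ⟨i1, j1, hbase, hclass⟩ := struct ha0 (i, m) hoinf
          have hself : {m' : ℕ | ((i, m') : X n) ∈ orbit a (i, m)}.Infinite :=
            ray_inf ha0 h0 hm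
          have hii := hclass i hself
          have hi'i := hclass i' hray'
          have h11 : SimRel a ta i1 j1 := Relation.EqvGen.rel _ _ hbase
          have hfin : SimRel a ta i' i := by
            rcases hii with rfl | rfl <;> rcases hi'i with rfl | rfl
            · exact Relation.EqvGen.refl _
            · exact Relation.EqvGen.symm _ _ h11
            · exact h11
            · exact Relation.EqvGen.refl _
          exact hsim (Relation.EqvGen.trans _ _ _ hsim' hfin)
        rw [hg'nmem l _ hnmem]
        refine ⟨rfl, ?_⟩
        have : tl l i = 0 := by
          simp only [htldef]
          rw [if_neg]
          rintro ⟨-, h⟩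
          exact hsim h
        simp [this]
  -- the correcting element
  set c : Fin k → ℤ := fun l => -(tx (reps l) / ta (reps l)) with hc
  set L : List (Equiv.Perm (X n) × (Fin n → ℤ)) :=
    (List.finRange k).map (fun l => ((g' l) ^ (c l), c l • tl l)) with hL
  set y := (L.map Prod.fst).prod with hy
  set ty := (L.map Prod.snd).sum with hty
  have hyev : EvTrans y ty := by
    apply evtrans_listProd
    intro q hq
    simp only [hL, List.mem_map, List.mem_finRange, true_and] at hq
    obtain ⟨l, rfl⟩ := hq
    exact evtrans_zpow ⟨Z, htl l⟩ (c l)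
  have hycomm : Commute a y := by
    apply Commute.list_prod_right
    intro p' hp'
    simp only [hL, List.map_map, List.mem_map, List.mem_finRange, true_and] at hp'
    obtain ⟨l, rfl⟩ := hp'
    exact (hcomm l).zpow_right (c l)
  have hty_eval : ∀ i : Fin n, ty i = ∑ l : Fin k, c l * tl l i := by
    intro i
    rw [hty, list_sum_apply, hL, List.map_map, List.map_map, Fin.sum_univ_def]
    congr 1
  refine ⟨y * x, ty + tx, evtrans_mul hyev hx, ?_, ?_, ?_⟩
  · have hya : y⁻¹ * a * y = a := by
      rw [mul_assoc, hycomm.eq, ← mul_assoc, inv_mul_cancel, one_mul]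
    have hexp : (y * x)⁻¹ * a * (y * x) = x⁻¹ * (y⁻¹ * a * y) * x := by group
    rw [hexp, hya, hconj]
  · intro i hne
    rw [Pi.add_apply, hty_eval]
    apply dvd_add
    · apply Finset.dvd_sum
      intro l _
      by_cases hcond : ta i ≠ 0 ∧ SimRel a ta (reps l) i
      · have : tl l i = ta i := by simp [htldef, hcond]
        rw [this]
        exact dvd_mul_left (ta i) (c l)
      · have : tl l i = 0 := by simp only [htldef]; rw [if_neg hcond]
        rw [this, mul_zero]
        exact dvd_zero _
    · exact hmod i hne
  · intro l0
    rw [Pi.add_apply, hty_eval]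
    have hsum : ∑ l : Fin k, c l * tl l (reps l0) = c l0 * ta (reps l0) := by
      rw [Finset.sum_eq_single l0]
      · congr 1
        simp only [htldef]
        rw [if_pos ⟨hrepsI l0, Relation.EqvGen.refl _⟩]
      · intro l _ hl
        have : tl l (reps l0) = 0 := by
          simp only [htldef]
          rw [if_neg]
          rintro ⟨-, h⟩
          exact hl (hdistinct l l0 h)
        rw [this, mul_zero]
      · intro h
        exact absurd (Finset.mem_univ l0) h
    rw [hsum]
    have hthis : tx (reps l0) / ta (reps l0) * ta (reps l0) = tx (reps l0) :=
      Int.ediv_mul_cancel (hmod _ (hrepsI l0))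
    show -(tx (reps l0) / ta (reps l0)) * ta (reps l0) + tx (reps l0) = 0
    linear_combination -hthis
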